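/- Color the edges of K_n with colors 1,…,t giving subgraphs H_1,…,H_t with H_j regular for all j ≥ 3. Let v x_0 ∈ E(H_1) and x_0 u ∉ E(H_1). Define a near exchange of length l as a list of 2l distinct edges (v x_0, x_0 u, v x_1, x_1 u, …, v x_{l−1}, x_{l−1} u) with x_i u and v x_{i+1} the same color for 0 ≤ i ≤ l−2, and x_j u not the same color as v x_0 for all j ≤ l−1. If v x_0 and x_0 u admit no exchange (a near exchange closing up: x_{l−1} u colored the same as v x_0, wrapping modulo l), then any longest near exchange starting (v x_0, x_0 u, …) ends with an edge x_{l−1} u belonging to H_2. -/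

import Mathlib

open SimpleGraph

attribute [local instance] Classical.propDecidable

/-- The spanning subgraph of `K_n` consisting of the edges with color `j`
under the edge coloring `c`. -/
def Hc {n : ℕ} (c : Sym2 (Fin n) → ℕ) (j : ℕ) : SimpleGraph (Fin n) where
  Adj x y := x ≠ y ∧ c s(x, y) = j
  symm := ⟨by
    rintro x y ⟨h1, h2⟩
    exact ⟨h1.symm, by rwa [Sym2.eq_swap]⟩⟩
  loopless := ⟨by rintro x ⟨h, -⟩; exact h rfl⟩

/-- An exchange for the edges `v x₀` and `x₀ u` (with `x₀ = x 0`): a cyclic list of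
`2l` distinct edges `(v x₀, x₀ u, v x₁, x₁ u, …, v x_{l-1}, x_{l-1} u)` such that
`x_i u` and `v x_{i+1}` have the same color for all `i` modulo `l`. -/
def IsExchange {n : ℕ} (c : Sym2 (Fin n) → ℕ) (v u : Fin n) (l : ℕ)
    (x : ℕ → Fin n) : Prop :=
  0 < l ∧ (∀ i, i < l → x i ≠ u ∧ x i ≠ v) ∧
    (∀ i j, i < l → j < l → x i = x j → i = j) ∧
    (∀ i, i < l → c s(x i, u) = c s(v, x ((i + 1) % l)))

/-- The set `X(L) = {x₀, …, x_{l-1}}` of an exchange (or near exchange). -/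
def ExchX {n : ℕ} (l : ℕ) (x : ℕ → Fin n) : Set (Fin n) := {y | ∃ i < l, x i = y}

/-- An exchange is simplified if for each color class at most one `x_j` has
`v x_j` of that color. -/
def Simplified {n : ℕ} (c : Sym2 (Fin n) → ℕ) (v : Fin n) (l : ℕ)
    (x : ℕ → Fin n) : Prop :=
  ∀ i j, i < l → j < l → c s(v, x i) = c s(v, x j) → i = j


/-- A near exchange of length `l`: a list of `2l` distinct edges
`(v x₀, x₀ u, …, v x_{l-1}, x_{l-1} u)` with `x_i u` and `v x_{i+1}` of equal
color for `0 ≤ i ≤ l - 2`, and `x_j u` never colored like `v x₀`. -/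
def IsNearExchange {n : ℕ} (c : Sym2 (Fin n) → ℕ) (v u : Fin n) (l : ℕ)
    (x : ℕ → Fin n) : Prop :=
  0 < l ∧ (∀ i, i < l → x i ≠ u ∧ x i ≠ v) ∧
    (∀ i j, i < l → j < l → x i = x j → i = j) ∧
    (∀ i, i + 1 < l → c s(x i, u) = c s(v, x (i + 1))) ∧
    (∀ j, j < l → c s(x j, u) ≠ c s(v, x 0))

theorem longest_near_exchange_ends_in_H2
    (n t : ℕ) (c : Sym2 (Fin n) → ℕ)
    (hcol : ∀ e : Sym2 (Fin n), ¬ e.IsDiag → 1 ≤ c e ∧ c e ≤ t)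
    (hreg : ∀ j, 3 ≤ j → j ≤ t → ∃ r, (Hc c j).IsRegularOfDegree r)
    (u v x0 : Fin n)
    (h1 : (Hc c 1).Adj v x0)
    (h2 : ¬ (Hc c 1).Adj x0 u) (hx0u : x0 ≠ u)
    -- `v x₀` and `x₀ u` cannot be exchanged
    (hno : ¬ ∃ (l : ℕ) (x : ℕ → Fin n), IsExchange c v u l x ∧ x 0 = x0)
    (l : ℕ) (x : ℕ → Fin n)
    (hnear : IsNearExchange c v u l x) (h0 : x 0 = x0)
    -- the near exchange is a longest one starting with `(v x₀, x₀ u)`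
    (hmax : ∀ (l' : ℕ) (x' : ℕ → Fin n),
      IsNearExchange c v u l' x' → x' 0 = x0 → l' ≤ l) :
    c s(x (l - 1), u) = 2 := by
  classical
  obtain ⟨hvx0ne, hvx0⟩ := h1
  obtain ⟨hl0, hne, hinj, hchain, hnot1⟩ := hnear
  have hlastu : x (l - 1) ≠ u := (hne (l - 1) (by omega)).1
  set k := c s(x (l - 1), u) with hk
  have hknd : ¬ (s(x (l - 1), u)).IsDiag := by
    rw [Sym2.mk_isDiag_iff]; exact hlastu
  obtain ⟨hk1, hkt⟩ := hcol _ hknd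
  have hkne1 : k ≠ 1 := by
    have := hnot1 (l - 1) (by omega)
    rw [h0, hvx0] at this
    exact this
  by_cases hk3 : 3 ≤ k
  · exfalso
    obtain ⟨r, hr⟩ := hreg k hk3 hkt
    -- no extension is possible
    have hblock : ∀ w : Fin n, (Hc c k).Adj v w → w = u ∨ ∃ i < l, x i = w := by
      intro w hw
      by_contra hcon
      push_neg at hcon
      obtain ⟨hwu, hwx⟩ := hcon
      obtain ⟨hvw, hcvw⟩ := hw
      set x' : ℕ → Fin n := fun i => if i < l then x i else w with hx'
      have hx'lt : ∀ i, i < l → x' i = x i := by intro i hi; simp [hx', hi]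
      have hx'l : x' l = w := by simp [hx']
      have hx'0 : x' 0 = x0 := by rw [hx'lt 0 hl0, h0]
      have hne' : ∀ i, i < l + 1 → x' i ≠ u ∧ x' i ≠ v := by
        intro i hi
        rcases lt_or_ge i l with h | h
        · rw [hx'lt i h]; exact hne i h
        · have : i = l := by omega
          rw [this, hx'l]; exact ⟨hwu, fun h => hvw h.symm⟩
      have hinj' : ∀ i j, i < l + 1 → j < l + 1 → x' i = x' j → i = j := by
        intro i j hi hj hij
        rcases lt_or_ge i l with h | h <;> rcases lt_or_ge j l with h' | h'
        · exact hinj i j h h' (by rwa [hx'lt i h, hx'lt j h'] at hij)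
        · exfalso
          have hjl : j = l := by omega
          rw [hx'lt i h, hjl, hx'l] at hij
          exact hwx i h hij
        · exfalso
          have hil : i = l := by omega
          rw [hx'lt j h', hil, hx'l] at hij
          exact hwx j h' hij.symm
        · omega
      by_cases hcw : c s(w, u) = c s(v, x0)
      · -- we obtain an exchange, contradiction with hno
        apply hno
        refine ⟨l + 1, x', ⟨by omega, hne', hinj', ?_⟩, hx'0⟩
        intro i hi
        rcases Nat.lt_or_ge i l with h | h
        · rw [hx'lt i h]
          have hmod : (i + 1) % (l + 1) = i + 1 := Nat.mod_eq_of_lt (by omega)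
          rw [hmod]
          rcases Nat.lt_or_ge (i + 1) l with h' | h'
          · rw [hx'lt (i + 1) h']
            exact hchain i h'
          · have hil : i = l - 1 := by omega
            have hil' : i + 1 = l := by omega
            rw [hil', hx'l, hil]; exact hcvw.symm
        · have hil : i = l := by omega
          rw [hil, hx'l]
          have hmod : (l + 1) % (l + 1) = 0 := Nat.mod_self _
          rw [hmod, hx'0]
          exact hcw
      · -- we obtain a longer near exchange, contradiction with hmax
        have := hmax (l + 1) x' ⟨by omega, hne', hinj', ?_, ?_⟩ hx'0
        · omega
        · intro i hi
          rcases Nat.lt_or_ge (i + 1) l with h' | h'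
          · rw [hx'lt i (by omega), hx'lt (i + 1) h']
            exact hchain i h'
          · have hil : i = l - 1 := by omega
            have hil' : i + 1 = l := by omega
            rw [hx'lt i (by omega), hil', hx'l, hil]; exact hcvw.symm
        · intro j hj
          rw [hx'0]
          rcases Nat.lt_or_ge j l with h | h
          · rw [hx'lt j h]
            have := hnot1 j h
            rwa [h0] at this
          · have : j = l := by omega
            rw [this, hx'l]
            exact hcw
    -- counting argument
    set A : Finset ℕ := (Finset.range l).filter (fun i => c s(v, x i) = k) with hA
    set B : Finset ℕ := (Finset.range l).filter (fun i => c s(x i, u) = k) with hB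
    have hApos : ∀ i ∈ A, 1 ≤ i := by
      intro i hi
      rw [hA, Finset.mem_filter, Finset.mem_range] at hi
      by_contra h
      have : i = 0 := by omega
      rw [this, h0, hvx0] at hi
      omega
    have hAcard : A.card < B.card := by
      have hsub : A.image (· - 1) ⊆ B.erase (l - 1) := by
        intro m hm
        rw [Finset.mem_image] at hm
        obtain ⟨i, hi, him⟩ := hm
        have hi1 : 1 ≤ i := hApos i hi
        rw [hA, Finset.mem_filter, Finset.mem_range] at hi
        have hml : m + 1 = i := by omega
        rw [Finset.mem_erase, hB, Finset.mem_filter, Finset.mem_range]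
        refine ⟨by omega, by omega, ?_⟩
        rw [← hml] at hi
        rw [hchain m (by omega)]
        exact hi.2
      have hl1B : l - 1 ∈ B := by
        rw [hB, Finset.mem_filter, Finset.mem_range]
        exact ⟨by omega, rfl⟩
      have h1 : A.card = (A.image (· - 1)).card := by
        rw [Finset.card_image_of_injOn]
        intro a ha b hb hab
        have := hApos a ha
        have := hApos b hb
        simp only at hab
        omega
      calc A.card = (A.image (· - 1)).card := h1
        _ ≤ (B.erase (l - 1)).card := Finset.card_le_card hsub
        _ < B.card := Finset.card_erase_lt_of_mem hl1B
    have hdegv : ((Hc c k).neighborFinset v).card = r := hr v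
    have hdegu : ((Hc c k).neighborFinset u).card = r := hr u
    have hBu : B.image x ⊆ (Hc c k).neighborFinset u := by
      intro w hw
      rw [Finset.mem_image] at hw
      obtain ⟨i, hi, hiw⟩ := hw
      rw [hB, Finset.mem_filter, Finset.mem_range] at hi
      rw [SimpleGraph.mem_neighborFinset, ← hiw]
      exact ⟨fun h => (hne i hi.1).1 h.symm, by rw [Sym2.eq_swap]; exact hi.2⟩
    have hBcard : B.card = (B.image x).card := by
      rw [Finset.card_image_of_injOn]
      intro a ha b hb hab
      simp only [Finset.mem_coe, hB, Finset.mem_filter, Finset.mem_range] at ha hb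
      exact hinj a b ha.1 hb.1 hab
    by_cases hadj : (Hc c k).Adj v u
    · have hsub : insert v (B.image x) ⊆ (Hc c k).neighborFinset u := by
        intro w hw
        rw [Finset.mem_insert] at hw
        rcases hw with h | h
        · rw [h, SimpleGraph.mem_neighborFinset]; exact hadj.symm
        · exact hBu h
      have hvnot : v ∉ B.image x := by
        rw [Finset.mem_image]
        rintro ⟨i, hi, hiv⟩
        rw [hB, Finset.mem_filter, Finset.mem_range] at hi
        exact (hne i hi.1).2 hiv
      have h1 : B.card + 1 ≤ r := by
        rw [← hdegu]
        calc B.card + 1 = (B.image x).card + 1 := by rw [hBcard]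
          _ = (insert v (B.image x)).card := (Finset.card_insert_of_notMem hvnot).symm
          _ ≤ _ := Finset.card_le_card hsub
      have hsub2 : (Hc c k).neighborFinset v ⊆ insert u (A.image x) := by
        intro w hw
        rw [SimpleGraph.mem_neighborFinset] at hw
        rcases hblock w hw with h | ⟨i, hi, hiw⟩
        · rw [h]; exact Finset.mem_insert_self _ _
        · apply Finset.mem_insert_of_mem
          rw [Finset.mem_image]
          refine ⟨i, ?_, hiw⟩
          rw [hA, Finset.mem_filter, Finset.mem_range]
          exact ⟨hi, by rw [hiw]; exact hw.2⟩
      have h2 : r ≤ A.card + 1 := by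
        rw [← hdegv]
        calc _ ≤ (insert u (A.image x)).card := Finset.card_le_card hsub2
          _ ≤ (A.image x).card + 1 := Finset.card_insert_le _ _
          _ ≤ A.card + 1 := by
            have := Finset.card_image_le (s := A) (f := x)
            omega
      omega
    · have h1 : B.card ≤ r := by
        rw [← hdegu, hBcard]
        exact Finset.card_le_card hBu
      have hsub2 : (Hc c k).neighborFinset v ⊆ A.image x := by
        intro w hw
        rw [SimpleGraph.mem_neighborFinset] at hw
        rcases hblock w hw with h | ⟨i, hi, hiw⟩
        · exact absurd (h ▸ hw) hadj
        · rw [Finset.mem_image]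
          refine ⟨i, ?_, hiw⟩
          rw [hA, Finset.mem_filter, Finset.mem_range]
          exact ⟨hi, by rw [hiw]; exact hw.2⟩
      have h2 : r ≤ A.card := by
        rw [← hdegv]
        calc _ ≤ (A.image x).card := Finset.card_le_card hsub2
          _ ≤ A.card := Finset.card_image_le
      omega
  · omega
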